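/- A closed subset H ⊆ Sym²(ℝⁿ) is a generalized equation (i.e., H = E ∩ (−G̃) for some pair of subequations E, G) if and only if H = closure(H + P) ∩ closure(H − P). -/

import Mathlib

open Topology Pointwise
open scoped Matrix

abbrev SymMat (n : ℕ) : Type := selfAdjoint (Matrix (Fin n) (Fin n) ℝ)

def PSD (n : ℕ) : Set (SymMat n) := {A | (A : Matrix (Fin n) (Fin n) ℝ).PosSemidef}

def dual {n : ℕ} (F : Set (SymMat n)) : Set (SymMat n) := {A | -A ∉ interior F}

lemma psd_zero (n : ℕ) : (0 : SymMat n) ∈ PSD n := by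
  simpa [PSD] using Matrix.PosSemidef.zero

lemma psd_add {n : ℕ} {p q : SymMat n} (hp : p ∈ PSD n) (hq : q ∈ PSD n) : p + q ∈ PSD n := by
  simpa [PSD] using Matrix.PosSemidef.add hp hq

lemma mem_neg_dual {n : ℕ} {G : Set (SymMat n)} {A : SymMat n} :
    A ∈ -(dual G) ↔ A ∉ interior G := by
  rw [Set.mem_neg]; simp [dual]

lemma closure_add_psd {n : ℕ} {S : Set (SymMat n)} (h : S + PSD n ⊆ S) :
    closure S + PSD n ⊆ closure S := by
  rintro _ ⟨a, ha, p, hp, rfl⟩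
  have := map_mem_closure (f := fun x => x + p) (continuous_id.add continuous_const) ha
    (fun x hx => h (Set.add_mem_add hx hp))
  exact this

lemma closure_sub_psd {n : ℕ} {S : Set (SymMat n)} (h : S - PSD n ⊆ S) :
    closure S - PSD n ⊆ closure S := by
  rintro _ ⟨a, ha, p, hp, rfl⟩
  have := map_mem_closure (f := fun x => x - p) (continuous_id.sub continuous_const) ha
    (fun x hx => h (Set.sub_mem_sub hx hp))
  exact this

lemma sa_smul_one (n : ℕ) (t : ℝ) : IsSelfAdjoint (t • (1 : Matrix (Fin n) (Fin n) ℝ)) :=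
  IsSelfAdjoint.smul (star_trivial t) (IsSelfAdjoint.one _)

def epsOne (n : ℕ) (t : ℝ) : SymMat n := ⟨t • 1, sa_smul_one n t⟩

lemma epsOne_mem_interior (n : ℕ) {ε : ℝ} (hε : 0 < ε) : epsOne n ε ∈ interior (PSD n) := by
  set δ : ℝ := ε / (n + 1) with hδdef
  have hδ : 0 < δ := by positivity
  have hδn : δ * n ≤ ε := by
    have h1 : δ * (n + 1) = ε := by rw [hδdef]; field_simp
    nlinarith
  set W : Set (SymMat n) :=
    {B | ∀ i j, |(B : Matrix (Fin n) (Fin n) ℝ) i j - ε • (1 : Matrix (Fin n) (Fin n) ℝ) i j| < δ}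
    with hWdef
  have hWopen : IsOpen W := by
    have : W = ⋂ i, ⋂ j, {B : SymMat n |
        |(B : Matrix (Fin n) (Fin n) ℝ) i j - ε • (1 : Matrix (Fin n) (Fin n) ℝ) i j| < δ} := by
      ext B
      rw [hWdef]
      simp only [Set.mem_iInter, Set.mem_setOf_eq]
    rw [this]
    refine isOpen_iInter_of_finite fun i => isOpen_iInter_of_finite fun j => ?_
    refine isOpen_lt (Continuous.abs ?_) continuous_const
    exact (continuous_subtype_val.matrix_elem i j).sub continuous_const
  have hmem : epsOne n ε ∈ W := by
    intro i j
    simpa [epsOne] using hδ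
  have hWsub : W ⊆ PSD n := by
    intro B hB
    refine Matrix.PosSemidef.of_dotProduct_mulVec_nonneg B.2 fun x => ?_
    rw [star_trivial]
    set N : Matrix (Fin n) (Fin n) ℝ := (B : Matrix (Fin n) (Fin n) ℝ) - ε • 1 with hNdef
    have hN : ∀ i j, |N i j| < δ := by
      intro i j; exact hB i j
    set S : ℝ := ∑ i, x i ^ 2 with hSdef
    set T : ℝ := ∑ i, |x i| with hTdef
    have hS : 0 ≤ S := Finset.sum_nonneg fun i _ => sq_nonneg _
    have hBd : (B : Matrix (Fin n) (Fin n) ℝ) = ε • 1 + N := by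
      rw [hNdef, add_sub_cancel]
    have hdot : x ⬝ᵥ ((B : Matrix (Fin n) (Fin n) ℝ) *ᵥ x) = ε * S + x ⬝ᵥ (N *ᵥ x) := by
      rw [hBd, Matrix.add_mulVec, Matrix.smul_mulVec, Matrix.one_mulVec,
        dotProduct_add, dotProduct_smul]
      congr 1
      simp [hSdef, dotProduct, sq, smul_eq_mul]
    have hquad : |x ⬝ᵥ (N *ᵥ x)| ≤ δ * (T * T) := by
      have h1 : |x ⬝ᵥ (N *ᵥ x)| ≤ ∑ i, |x i| * (δ * T) := by
        refine le_trans (Finset.abs_sum_le_sum_abs _ _) (Finset.sum_le_sum fun i _ => ?_)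
        rw [abs_mul]
        refine mul_le_mul_of_nonneg_left ?_ (abs_nonneg _)
        calc |∑ j, N i j * x j| ≤ ∑ j, |N i j * x j| := Finset.abs_sum_le_sum_abs _ _
          _ ≤ ∑ j, δ * |x j| := Finset.sum_le_sum fun j _ => by
              rw [abs_mul]
              exact mul_le_mul_of_nonneg_right (le_of_lt (hN i j)) (abs_nonneg _)
          _ = δ * T := by rw [hTdef, Finset.mul_sum]
      calc |x ⬝ᵥ (N *ᵥ x)| ≤ ∑ i, |x i| * (δ * T) := h1
        _ = δ * (T * T) := by rw [← Finset.sum_mul, hTdef]; ring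
    have hT2 : T * T ≤ n * S := by
      have := sq_sum_le_card_mul_sum_sq (s := Finset.univ) (f := fun i : Fin n => |x i|)
      simpa [hTdef, hSdef, sq, sq_abs, abs_mul_abs_self] using this
    have hv : -(δ * (T * T)) ≤ x ⬝ᵥ (N *ᵥ x) := neg_le_of_abs_le hquad
    have h2 : δ * (T * T) ≤ δ * (n * S) := mul_le_mul_of_nonneg_left hT2 (le_of_lt hδ)
    have h3 : δ * (n * S) ≤ ε * S := by
      rw [← mul_assoc]
      exact mul_le_mul_of_nonneg_right hδn hS
    rw [hdot]
    linarith
  exact interior_maximal hWsub hWopen hmem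

theorem stmt16 (n : ℕ) (H : Set (SymMat n)) (hcl : IsClosed H) :
    (∃ E G : Set (SymMat n), IsClosed E ∧ E + PSD n ⊆ E ∧ IsClosed G ∧ G + PSD n ⊆ G ∧
        H = E ∩ -(dual G)) ↔
      H = closure (H + PSD n) ∩ closure (H - PSD n) := by
  constructor
  · rintro ⟨E, G, hEcl, hEP, hGcl, hGP, rfl⟩
    set H := E ∩ -(dual G) with hHdef
    apply subset_antisymm
    · intro A hA
      constructor
      · apply subset_closure
        have := Set.add_mem_add hA (psd_zero n)
        rwa [add_zero] at this
      · apply subset_closure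
        have := Set.sub_mem_sub hA (psd_zero n)
        rwa [sub_zero] at this
    · rintro A ⟨hA1, hA2⟩
      constructor
      · refine hEcl.closure_subset_iff.mpr ?_ hA1
        rintro _ ⟨a, ha, p, hp, rfl⟩
        exact hEP (Set.add_mem_add ha.1 hp)
      · rw [mem_neg_dual]
        have hsub : H - PSD n ⊆ (interior G)ᶜ := by
          rintro _ ⟨a, ha, p, hp, rfl⟩ hmem
          have himg : ((· + p) '' interior G) ⊆ interior G := by
            refine interior_maximal ?_ (isOpenMap_add_right p _ isOpen_interior)
            rintro _ ⟨y, hy, rfl⟩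
            exact hGP (Set.add_mem_add (interior_subset hy) hp)
          have : a ∈ interior G := by
            have : a - p + p ∈ interior G := himg ⟨a - p, hmem, rfl⟩
            rwa [sub_add_cancel] at this
          exact (mem_neg_dual.mp ha.2) this
        have := (isOpen_interior.isClosed_compl.closure_subset_iff.mpr hsub) hA2
        exact this
  · intro hH
    set C : Set (SymMat n) := closure (H - PSD n) with hCdef
    have hCc : Cᶜ + PSD n ⊆ Cᶜ := by
      rintro _ ⟨a, ha, p, hp, rfl⟩ hmem
      apply ha
      have hsub : C - PSD n ⊆ C := by
        apply closure_sub_psd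
        rintro _ ⟨_, ⟨h1, hh1, q, hq, rfl⟩, p', hp', rfl⟩
        exact ⟨h1, hh1, q + p', psd_add hq hp', (sub_sub _ _ _).symm⟩
      have : a + p - p ∈ C := hsub (Set.sub_mem_sub hmem hp)
      rwa [add_sub_cancel_right] at this
    refine ⟨closure (H + PSD n), closure Cᶜ, isClosed_closure, ?_, isClosed_closure, ?_, ?_⟩
    · apply closure_add_psd
      rintro _ ⟨_, ⟨h1, hh1, q, hq, rfl⟩, p', hp', rfl⟩
      exact ⟨h1, hh1, q + p', psd_add hq hp', (add_assoc _ _ _).symm⟩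
    · exact closure_add_psd hCc
    · have hint : interior (closure Cᶜ) = Cᶜ := by
        apply subset_antisymm
        · intro A hA
          have hcont : Continuous (fun t : ℝ => A - epsOne n t) := by
            apply Continuous.sub continuous_const
            exact Continuous.subtype_mk (continuous_id.smul continuous_const) _
          have h0 : (fun t : ℝ => A - epsOne n t) 0 ∈ interior (closure Cᶜ) := by
            have : epsOne n 0 = 0 := by
              apply Subtype.ext; simp [epsOne]
            simpa [this] using hA
          have hpre : IsOpen ((fun t : ℝ => A - epsOne n t) ⁻¹' interior (closure Cᶜ)) :=
            isOpen_interior.preimage hcont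
          obtain ⟨ε, hε, hball⟩ := Metric.isOpen_iff.mp hpre 0 h0
          have hmemB : A - epsOne n (ε / 2) ∈ closure Cᶜ := by
            refine interior_subset (hball ?_)
            simp only [Metric.mem_ball, Real.dist_eq, sub_zero]
            rw [abs_of_pos (by linarith)]
            linarith
          set V : Set (SymMat n) := (fun X : SymMat n => A - X) ⁻¹' interior (PSD n) with hVdef
          have hVopen : IsOpen V :=
            isOpen_interior.preimage (continuous_const.sub continuous_id)
          have hBV : A - epsOne n (ε / 2) ∈ V := by
            have : A - (A - epsOne n (ε / 2)) = epsOne n (ε / 2) := by abel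
            simp only [hVdef, Set.mem_preimage, this]
            exact epsOne_mem_interior n (by linarith)
          obtain ⟨X, hXV, hXC⟩ := (mem_closure_iff.mp hmemB) V hVopen hBV
          have hAX : A - X ∈ PSD n := interior_subset hXV
          have : X + (A - X) ∈ Cᶜ := hCc ⟨X, hXC, A - X, hAX, rfl⟩
          rwa [add_sub_cancel] at this
        · exact interior_maximal subset_closure isClosed_closure.isOpen_compl
      have hnd : -(dual (closure Cᶜ)) = C := by
        ext A
        rw [mem_neg_dual, hint, Set.mem_compl_iff, not_not]
      rw [hnd]
      exact hH
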